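/- Let α_n = α_0 r^n with α_0 > 0, 0 < r < 1, s_{-1} = 0 and s_n = Σ_{j=0}^n 1/α_j. For every 0 ≤ μ < 1 there is a constant C_1 depending only on r and μ such that Σ_{j=0}^n (1/α_j)(s_n - s_{j-1})^{-1} s_j^{-μ} ≤ C_1 s_n^{-μ} for all n ≥ 0. -/

import Mathlib

open Finset Real

noncomputable def Sg (r : ℝ) (m : ℕ) : ℝ := ((r⁻¹) ^ m - 1) / (r⁻¹ - 1)

private lemma geom_core (r μ : ℝ) (hr0 : 0 < r) (hr1 : r < 1) (hμ0 : 0 ≤ μ) (hμ1 : μ < 1) :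
    ∃ C1 : ℝ, 0 < C1 ∧ ∀ n : ℕ,
      ∑ j ∈ Finset.range (n + 1),
        (r⁻¹) ^ j * (Sg r (n + 1) - Sg r j)⁻¹ * (Sg r (j + 1)) ^ (-μ)
      ≤ C1 * (Sg r (n + 1)) ^ (-μ) := by
  set ρ := r⁻¹ with hρdef
  have hρ : 1 < ρ := one_lt_inv₀ hr0 |>.mpr hr1
  have hρ0 : 0 < ρ := inv_pos.mpr hr0
  have hd : 0 < ρ - 1 := by linarith
  set K := (ρ / (ρ - 1)) ^ μ with hK
  have hKpos : 0 < K := Real.rpow_pos_of_pos (div_pos hρ0 hd) μ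
  set q := r * ρ ^ μ with hqdef
  have hq_eq : q = r ^ (1 - μ) := by
    rw [hqdef, hρdef, Real.inv_rpow hr0.le, Real.rpow_sub hr0, Real.rpow_one, div_eq_mul_inv]
  have hq0 : 0 < q := mul_pos hr0 (Real.rpow_pos_of_pos hρ0 μ)
  have hq1 : q < 1 := by rw [hq_eq]; exact Real.rpow_lt_one hr0.le hr1 (by linarith)
  have h1q : 0 < 1 - q := by linarith
  refine ⟨K * (1 - q)⁻¹, by positivity, ?_⟩
  intro n
  have hSpos : ∀ m : ℕ, 0 < Sg r (m + 1) := fun m =>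
    div_pos (sub_pos.mpr (one_lt_pow₀ hρ m.succ_ne_zero)) hd
  have hterm : ∀ j ∈ Finset.range (n + 1),
      ρ ^ j * (Sg r (n + 1) - Sg r j)⁻¹ * (Sg r (j + 1)) ^ (-μ)
        ≤ K * q ^ (n - j) * (Sg r (n + 1)) ^ (-μ) := by
    intro j hj
    have hjn : j ≤ n := by
      have := Finset.mem_range.mp hj; omega
    set k := n - j with hk
    have hjk : j + k = n := by omega
    have hρj : (0:ℝ) < ρ ^ j := pow_pos hρ0 j
    have hρk : (1:ℝ) ≤ ρ ^ k := one_le_pow₀ hρ.le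
    have hρk1 : (0:ℝ) < ρ ^ (k + 1) - 1 := sub_pos.mpr (one_lt_pow₀ hρ k.succ_ne_zero)
    have hdiff_eq : Sg r (n + 1) - Sg r j = ρ ^ j * (ρ ^ (k + 1) - 1) / (ρ - 1) := by
      have hpow : ρ ^ (n + 1) = ρ ^ j * ρ ^ (k + 1) := by
        rw [← pow_add]; congr 1; omega
      simp only [Sg, ← hρdef, hpow]; ring
    -- Step A
    have hA : ρ ^ j * (Sg r (n + 1) - Sg r j)⁻¹ ≤ r ^ k := by
      rw [hdiff_eq]
      have hr_eq : r ^ k = (ρ ^ k)⁻¹ := by rw [hρdef, ← inv_pow, inv_inv]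
      have heq : ρ ^ j * (ρ ^ j * (ρ ^ (k + 1) - 1) / (ρ - 1))⁻¹
          = (ρ - 1) / (ρ ^ (k + 1) - 1) := by
        field_simp
      rw [heq, hr_eq, div_le_iff₀ hρk1, inv_mul_eq_div, le_div_iff₀ (pow_pos hρ0 k)]
      have hps : ρ ^ (k + 1) = ρ ^ k * ρ := pow_succ ρ k
      nlinarith
    -- Step B
    have hB : (Sg r (j + 1)) ^ (-μ) ≤ ((ρ ^ μ) ^ k * K) * (Sg r (n + 1)) ^ (-μ) := by
      set D := ρ ^ k * (ρ / (ρ - 1)) with hD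
      have hDpos : 0 < D := by positivity
      have hBD : Sg r (n + 1) ≤ D * Sg r (j + 1) := by
        have e1 : ρ ^ (n + 1) = ρ ^ k * ρ * ρ ^ j := by
          rw [mul_assoc, mul_comm, ← pow_succ', ← pow_add]; congr 1; omega
        have e2 : ρ ^ (j + 1) = ρ * ρ ^ j := by rw [pow_succ']
        have key : (ρ ^ (n + 1) - 1) * (ρ - 1) ≤ ρ ^ k * ρ * (ρ ^ (j + 1) - 1) := by
          rw [e1, e2]
          have h1j : (1:ℝ) ≤ ρ ^ j := one_le_pow₀ hρ.le
          nlinarith [mul_nonneg (sub_nonneg.mpr h1j) (mul_pos (mul_pos (pow_pos hρ0 k) hρ0) hρ0).le]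
        have hDrw : D * Sg r (j + 1) = (ρ ^ k * ρ * (ρ ^ (j + 1) - 1)) / ((ρ - 1) * (ρ - 1)) := by
          simp only [Sg, ← hρdef, hD]; field_simp
        rw [hDrw]
        simp only [Sg, ← hρdef]
        rw [div_le_div_iff₀ hd (by positivity)]
        nlinarith [mul_le_mul_of_nonneg_right key hd.le]
      have h1 : (D * Sg r (j + 1)) ^ (-μ) ≤ (Sg r (n + 1)) ^ (-μ) :=
        Real.rpow_le_rpow_of_nonpos (hSpos n) hBD (neg_nonpos.mpr hμ0)
      have h2 : (D * Sg r (j + 1)) ^ (-μ) = D ^ (-μ) * (Sg r (j + 1)) ^ (-μ) :=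
        Real.mul_rpow hDpos.le (hSpos j).le
      have h3 : D ^ μ * D ^ (-μ) = 1 := by
        rw [← Real.rpow_add hDpos]; simp
      have h4 : D ^ μ = (ρ ^ μ) ^ k * K := by
        rw [hD, Real.mul_rpow (pow_pos hρ0 k).le (div_pos hρ0 hd).le, hK]
        congr 1
        rw [← Real.rpow_natCast ρ k, ← Real.rpow_natCast (ρ ^ μ) k,
          ← Real.rpow_mul hρ0.le, ← Real.rpow_mul hρ0.le, mul_comm]
      calc (Sg r (j + 1)) ^ (-μ) = D ^ μ * (D ^ (-μ) * (Sg r (j + 1)) ^ (-μ)) := by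
            rw [← mul_assoc, h3, one_mul]
        _ ≤ D ^ μ * (Sg r (n + 1)) ^ (-μ) := by
            apply mul_le_mul_of_nonneg_left _ (Real.rpow_nonneg hDpos.le μ)
            rw [← h2]; exact h1
        _ = ((ρ ^ μ) ^ k * K) * (Sg r (n + 1)) ^ (-μ) := by rw [h4]
    calc ρ ^ j * (Sg r (n + 1) - Sg r j)⁻¹ * (Sg r (j + 1)) ^ (-μ)
        ≤ r ^ k * (((ρ ^ μ) ^ k * K) * (Sg r (n + 1)) ^ (-μ)) := by
          apply mul_le_mul hA hB (Real.rpow_nonneg (hSpos j).le _) (pow_nonneg hr0.le k)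
      _ = K * q ^ k * (Sg r (n + 1)) ^ (-μ) := by
          rw [hqdef, mul_pow]; ring
  calc ∑ j ∈ Finset.range (n + 1),
        ρ ^ j * (Sg r (n + 1) - Sg r j)⁻¹ * (Sg r (j + 1)) ^ (-μ)
      ≤ ∑ j ∈ Finset.range (n + 1), K * q ^ (n - j) * (Sg r (n + 1)) ^ (-μ) :=
        Finset.sum_le_sum hterm
    _ = (∑ j ∈ Finset.range (n + 1), q ^ (n - j)) * (K * (Sg r (n + 1)) ^ (-μ)) := by
        rw [Finset.sum_mul]; apply Finset.sum_congr rfl; intros; ring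
    _ = (∑ j ∈ Finset.range (n + 1), q ^ j) * (K * (Sg r (n + 1)) ^ (-μ)) := by
        congr 1
        have h := Finset.sum_range_reflect (fun i => q ^ i) (n + 1)
        simpa using h
    _ ≤ (1 - q)⁻¹ * (K * (Sg r (n + 1)) ^ (-μ)) := by
        apply mul_le_mul_of_nonneg_right _
          (mul_nonneg hKpos.le (Real.rpow_nonneg (hSpos n).le _))
        rw [← tsum_geometric_of_lt_one hq0.le hq1]
        exact Summable.sum_le_tsum _ (fun i _ => pow_nonneg hq0.le i)
          (summable_geometric_of_lt_one hq0.le hq1)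
    _ = K * (1 - q)⁻¹ * (Sg r (n + 1)) ^ (-μ) := by ring

theorem stmt_7 (r μ : ℝ) (hr0 : 0 < r) (hr1 : r < 1) (hμ0 : 0 ≤ μ) (hμ1 : μ < 1) :
    ∃ C1 : ℝ, 0 < C1 ∧ ∀ α0 : ℝ, 0 < α0 →
      ∀ n : ℕ,
        ∑ j ∈ Finset.range (n + 1),
            (1 / (α0 * r ^ j)) *
              ((∑ i ∈ Finset.range (n + 1), 1 / (α0 * r ^ i)) -
                  ∑ i ∈ Finset.range j, 1 / (α0 * r ^ i)) ^ (-(1 : ℝ)) *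
              (∑ i ∈ Finset.range (j + 1), 1 / (α0 * r ^ i)) ^ (-μ) ≤
          C1 * (∑ i ∈ Finset.range (n + 1), 1 / (α0 * r ^ i)) ^ (-μ) := by
  obtain ⟨C1, hC1, hcore⟩ := geom_core r μ hr0 hr1 hμ0 hμ1
  refine ⟨C1, hC1, ?_⟩
  intro α0 hα0 n
  have hρ : 1 < r⁻¹ := one_lt_inv₀ hr0 |>.mpr hr1
  have hρ0 : 0 < r⁻¹ := inv_pos.mpr hr0
  have hd : 0 < r⁻¹ - 1 := by linarith
  have hsum : ∀ m : ℕ, ∑ i ∈ Finset.range m, 1 / (α0 * r ^ i) = Sg r m / α0 := by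
    intro m
    have h1 : ∀ i, 1 / (α0 * r ^ i) = (r⁻¹) ^ i * α0⁻¹ := by
      intro i; rw [one_div, mul_inv, ← inv_pow, mul_comm]
    rw [Finset.sum_congr rfl fun i _ => h1 i, ← Finset.sum_mul, geom_sum_eq (ne_of_gt hρ)]
    rw [Sg]; ring
  have hSpos : ∀ m : ℕ, 0 < Sg r (m + 1) := fun m =>
    div_pos (sub_pos.mpr (one_lt_pow₀ hρ m.succ_ne_zero)) hd
  have hα0μ : 0 < α0 ^ μ := Real.rpow_pos_of_pos hα0 μ
  have hdiffpos : ∀ j ≤ n, 0 < Sg r (n + 1) - Sg r j := by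
    intro j hj
    have heq : Sg r (n + 1) - Sg r j = ((r⁻¹) ^ (n + 1) - (r⁻¹) ^ j) / (r⁻¹ - 1) := by
      unfold Sg; ring
    rw [heq]
    exact div_pos (sub_pos.mpr (pow_lt_pow_right₀ hρ (by omega))) hd
  calc ∑ j ∈ Finset.range (n + 1),
          (1 / (α0 * r ^ j)) *
            ((∑ i ∈ Finset.range (n + 1), 1 / (α0 * r ^ i)) -
                ∑ i ∈ Finset.range j, 1 / (α0 * r ^ i)) ^ (-(1 : ℝ)) *
            (∑ i ∈ Finset.range (j + 1), 1 / (α0 * r ^ i)) ^ (-μ)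
      = ∑ j ∈ Finset.range (n + 1),
          α0 ^ μ * ((r⁻¹) ^ j * (Sg r (n + 1) - Sg r j)⁻¹ * (Sg r (j + 1)) ^ (-μ)) := by
        apply Finset.sum_congr rfl
        intro j hj
        have hjn : j ≤ n := by have := Finset.mem_range.mp hj; omega
        have hne : Sg r (n + 1) - Sg r j ≠ 0 := (hdiffpos j hjn).ne'
        simp only [hsum]
        rw [div_sub_div_same, Real.rpow_neg_one,
          Real.div_rpow (hSpos j).le hα0.le, Real.rpow_neg hα0.le]
        field_simp
        ring_nf; rw [inv_pow, mul_assoc, mul_inv_cancel₀ (pow_ne_zero _ hr0.ne'), mul_one]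
    _ = α0 ^ μ * ∑ j ∈ Finset.range (n + 1),
          (r⁻¹) ^ j * (Sg r (n + 1) - Sg r j)⁻¹ * (Sg r (j + 1)) ^ (-μ) :=
        (Finset.mul_sum _ _ _).symm
    _ ≤ α0 ^ μ * (C1 * (Sg r (n + 1)) ^ (-μ)) :=
        mul_le_mul_of_nonneg_left (hcore n) hα0μ.le
    _ = C1 * (Sg r (n + 1) / α0) ^ (-μ) := by
        rw [Real.div_rpow (hSpos n).le hα0.le, Real.rpow_neg hα0.le]
        field_simp
    _ = C1 * (∑ i ∈ Finset.range (n + 1), 1 / (α0 * r ^ i)) ^ (-μ) := by rw [hsum]
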